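/- Let X be a finite probability space with measure μ, f a density, and (φ_s)_{s∈[0,T]} a piecewise-constant family of bounded functions. Define g_t = exp(∫₀ᵗ φ_s ds) / E_μ exp(∫₀ᵗ φ_s ds). Then for almost every t ∈ [0,T), (d/dt) D_μ(f ‖ g_t) = ⟨φ_t, g_t − f⟩. -/

import Mathlib

open Finset Real

/-- Derivative of the relative entropy along the exponential flow: with
`g_t = exp(Ψ + tφ)/𝔼_μ exp(Ψ + tφ)` (the constant-`φ` piece of a
piecewise-constant flow) and `f` a density,
`(d/dt) D_μ(f ‖ g_t) = ⟨φ, g_t − f⟩`. -/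
theorem deriv_relative_entropy_flow {X : Type*} [Fintype X] (μ : X → ℝ)
    (hμ0 : ∀ x, 0 ≤ μ x) (hμ1 : ∑ x, μ x = 1)
    (f : X → ℝ) (hf0 : ∀ x, 0 ≤ f x) (hf1 : ∑ x, μ x * f x = 1)
    (Ψ φ : X → ℝ)
    (g : ℝ → X → ℝ)
    (hg : ∀ s x, g s x =
      Real.exp (Ψ x + s * φ x) / ∑ y, μ y * Real.exp (Ψ y + s * φ y))
    (t : ℝ) :
    HasDerivAt (fun s => ∑ x, μ x * (f x * Real.log (f x / g s x)))
      (∑ x, μ x * (φ x * (g t x - f x))) t := by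
  classical
  set Z : ℝ → ℝ := fun s => ∑ y, μ y * Real.exp (Ψ y + s * φ y) with hZdef
  have hZpos : ∀ s, 0 < Z s := by
    intro s
    have hex : ∃ x, 0 < μ x := by
      by_contra h
      push_neg at h
      have h0 : ∑ x, μ x = 0 :=
        Finset.sum_eq_zero fun x _ => le_antisymm (h x) (hμ0 x)
      rw [h0] at hμ1; norm_num at hμ1
    obtain ⟨x0, hx0⟩ := hex
    apply Finset.sum_pos'
    · intro i _
      have := hμ0 i
      positivity
    · exact ⟨x0, Finset.mem_univ x0, by positivity⟩
  -- rewrite the function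
  have hfun : (fun s => ∑ x, μ x * (f x * Real.log (f x / g s x)))
      = fun s => (∑ x, μ x * (f x * (Real.log (f x) - Ψ x - s * φ x)))
        + Real.log (Z s) := by
    funext s
    have hterm : ∀ x, μ x * (f x * Real.log (f x / g s x))
        = μ x * (f x * (Real.log (f x) - Ψ x - s * φ x)) + μ x * f x * Real.log (Z s) := by
      intro x
      rcases eq_or_lt_of_le (hf0 x) with h0 | hpos
      · simp [← h0]
      · have hgx : g s x = Real.exp (Ψ x + s * φ x) / Z s := hg s x
        have hgpos : 0 < g s x := by rw [hgx]; exact div_pos (Real.exp_pos _) (hZpos s)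
        rw [Real.log_div (ne_of_gt hpos) (ne_of_gt hgpos), hgx,
          Real.log_div (Real.exp_ne_zero _) (ne_of_gt (hZpos s)), Real.log_exp]
        ring
    rw [Finset.sum_congr rfl fun x _ => hterm x, Finset.sum_add_distrib,
      ← Finset.sum_mul, hf1, one_mul]
  rw [hfun]
  -- derivative of Z
  have hZ' : HasDerivAt Z (∑ y, μ y * (φ y * Real.exp (Ψ y + t * φ y))) t := by
    apply HasDerivAt.fun_sum
    intro y _
    have h1 : HasDerivAt (fun s : ℝ => Ψ y + s * φ y) (φ y) t := by
      simpa using ((hasDerivAt_id t).mul_const (φ y)).const_add (Ψ y)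
    simpa [mul_comm, mul_assoc, mul_left_comm] using (h1.exp.const_mul (μ y))
  -- derivative of first sum
  have h1 : HasDerivAt (fun s => ∑ x, μ x * (f x * (Real.log (f x) - Ψ x - s * φ x)))
      (∑ x, μ x * (f x * (-φ x))) t := by
    apply HasDerivAt.fun_sum
    intro x _
    have : HasDerivAt (fun s : ℝ => Real.log (f x) - Ψ x - s * φ x) (-φ x) t := by
      simpa using ((hasDerivAt_id t).mul_const (φ x)).const_sub (Real.log (f x) - Ψ x)
    simpa using (this.const_mul (f x)).const_mul (μ x)
  have h2 : HasDerivAt (fun s => Real.log (Z s))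
      ((∑ y, μ y * (φ y * Real.exp (Ψ y + t * φ y))) / Z t) t :=
    hZ'.log (ne_of_gt (hZpos t))
  have h := h1.fun_add h2
  refine h.congr_deriv ?_
  rw [Finset.sum_div, ← Finset.sum_add_distrib]
  apply Finset.sum_congr rfl
  intro x _
  rw [hg t x]
  simp only [hZdef]
  have : 0 < ∑ y, μ y * Real.exp (Ψ y + t * φ y) := hZpos t
  field_simp
  ring
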